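/- For all s ≥ 0, n ≥ 1, and 0 ≤ l ≤ (n-s)/2, ∑_{i=0}^{s} C(s,i)·L_{h,n+i}^{l+i}(x)·h(x)^i = L_{h,n+2s}^{l+s}(x). -/

import Mathlib

open Finset

/-- Incomplete h-Fibonacci polynomials: F_{h,n}^l = ∑_{i=0}^l C(n-1-i,i) h^(n-1-2i). -/
noncomputable def incF (h : ℝ) (n l : ℕ) : ℝ :=
  ∑ i ∈ Finset.range (l + 1), (Nat.choose (n - 1 - i) i : ℝ) * h ^ (n - 1 - 2 * i)

/-- Incomplete h-Lucas polynomials: L_{h,n}^l = ∑_{i=0}^l (n/(n-i)) C(n-i,i) h^(n-2i). -/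
noncomputable def incL (h : ℝ) (n l : ℕ) : ℝ :=
  ∑ i ∈ Finset.range (l + 1), ((n : ℝ) / ((n - i : ℕ) : ℝ)) * (Nat.choose (n - i) i : ℝ) * h ^ (n - 2 * i)

/-- h-Fibonacci sequence. -/
noncomputable def Fh (h : ℝ) : ℕ → ℝ
  | 0 => 0
  | 1 => 1
  | n + 2 => h * Fh h (n + 1) + Fh h n

/-- h-Lucas sequence. -/
noncomputable def Lh (h : ℝ) : ℕ → ℝ
  | 0 => 2
  | 1 => h
  | n + 2 => h * Lh h (n + 1) + Lh h n

/-- The Lucas-type coefficient splits as a sum of two binomials. -/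
lemma coeff_eq (n j : ℕ) (hj : 1 ≤ j) (h2 : 2 * j ≤ n) :
    ((n : ℝ) / ((n - j : ℕ) : ℝ)) * (Nat.choose (n - j) j : ℝ)
      = (Nat.choose (n - j) j : ℝ) + (Nat.choose (n - j - 1) (j - 1) : ℝ) := by
  have h1 : 1 ≤ n - j := by omega
  have h3 := Nat.add_one_mul_choose_eq (n - j - 1) (j - 1)
  have e1 : n - j - 1 + 1 = n - j := by omega
  have e2 : j - 1 + 1 = j := by omega
  rw [e1, e2] at h3
  -- h3 : (n - j) * choose (n-j-1) (j-1) = choose (n-j) j * j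
  have h3' : ((n - j : ℕ) : ℝ) * (Nat.choose (n - j - 1) (j - 1) : ℝ)
      = (Nat.choose (n - j) j : ℝ) * (j : ℝ) := by exact_mod_cast congrArg (Nat.cast (R := ℝ)) h3
  have hjn : j ≤ n := by omega
  have hc : ((n - j : ℕ) : ℝ) = (n : ℝ) - (j : ℝ) := by push_cast [hjn]; ring
  have hne : ((n - j : ℕ) : ℝ) ≠ 0 := by
    have : (0 : ℕ) < n - j := h1
    exact_mod_cast this.ne'
  rw [div_mul_eq_mul_div, div_eq_iff hne]
  rw [hc] at h3' ⊢
  linarith [h3']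

/-- Termwise identity for the recurrence. -/
lemma term_id (h : ℝ) (m i : ℕ) (hm : 1 ≤ m) :
    (((m+2 : ℕ) : ℝ) / (((m+2) - (i+1) : ℕ) : ℝ)) * (Nat.choose ((m+2) - (i+1)) (i+1) : ℝ)
        * h ^ ((m+2) - 2*(i+1))
      = h * ((((m+1 : ℕ) : ℝ) / (((m+1) - (i+1) : ℕ) : ℝ)) * (Nat.choose ((m+1) - (i+1)) (i+1) : ℝ)
        * h ^ ((m+1) - 2*(i+1)))
      + ((m : ℕ) : ℝ) / ((m - i : ℕ) : ℝ) * (Nat.choose (m - i) i : ℝ) * h ^ (m - 2*i) := by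
  rcases lt_trichotomy (2*i) m with hlt | heq | hgt
  · -- 2*i < m
    obtain ⟨a, ha⟩ : ∃ a, m - 2*i = a + 1 := ⟨m - 2*i - 1, by omega⟩
    have e1 : (m+2) - (i+1) = m - i + 1 := by omega
    have e2 : (m+1) - (i+1) = m - i := by omega
    have e3 : (m+2) - 2*(i+1) = a + 1 := by omega
    have e4 : (m+1) - 2*(i+1) = a := by omega
    rw [e1, e2, e3, e4, ha]
    rcases Nat.eq_zero_or_pos i with hi0 | hipos
    · subst hi0
      simp only [Nat.sub_zero, zero_add, Nat.choose_one_right, Nat.choose_zero_right]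
      have hm0 : (m : ℝ) ≠ 0 := by
        exact_mod_cast (Nat.pos_of_ne_zero (by omega)).ne'
      have hm1 : ((m : ℝ) + 1) ≠ 0 := by positivity
      push_cast
      field_simp
      ring
    · -- i ≥ 1 : use coeff_eq three times
      obtain ⟨b, rfl⟩ : ∃ b, i = b + 1 := ⟨i - 1, by omega⟩
      have c1 := coeff_eq (m+2) (b+1+1) (by omega) (by omega)
      have c2 := coeff_eq (m+1) (b+1+1) (by omega) (by omega)
      have c3 := coeff_eq m (b+1) (by omega) (by omega)
      have f1 : (m+2) - (b+1+1) = m - (b+1) + 1 := by omega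
      have f2 : (m+1) - (b+1+1) = m - (b+1) := by omega
      have f3 : m - (b+1) + 1 - 1 = m - (b+1) := by omega
      have f4 : b + 1 + 1 - 1 = b + 1 := by omega
      have f5 : b + 1 - 1 = b := by omega
      rw [f1, f3, f4] at c1
      rw [f2, f4] at c2
      rw [f5] at c3
      rw [c1, c2, c3]
      have pasc1 : Nat.choose (m - (b+1) + 1) (b+1+1)
          = Nat.choose (m - (b+1)) (b+1) + Nat.choose (m - (b+1)) (b+1+1) :=
        Nat.choose_succ_succ _ _
      have pasc2 : Nat.choose (m - (b+1)) (b+1)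
          = Nat.choose (m - (b+1) - 1) b + Nat.choose (m - (b+1) - 1) (b+1) := by
        obtain ⟨c, hc⟩ : ∃ c, m - (b+1) = c + 1 := ⟨m - (b+1) - 1, by omega⟩
        rw [hc]
        simp [Nat.choose_succ_succ]
      push_cast [pasc1, pasc2]
      ring
  · -- 2*i = m : middle choose is zero, both ends equal 2
    have hi : 1 ≤ i := by omega
    have e1 : (m+2) - (i+1) = i + 1 := by omega
    have e2 : (m+1) - (i+1) = i := by omega
    have e3 : (m+2) - 2*(i+1) = 0 := by omega
    have e4 : m - i = i := by omega
    have e5 : m - 2*i = 0 := by omega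
    rw [e1, e2, e3, e4, e5]
    rw [Nat.choose_eq_zero_of_lt (by omega : i < i + 1)]
    simp only [Nat.choose_self, Nat.cast_one, Nat.cast_zero, pow_zero, mul_one, mul_zero, zero_mul,
      add_zero]
    have hi0 : ((i : ℝ)) ≠ 0 := by exact_mod_cast (Nat.pos_of_ne_zero (by omega)).ne'
    have hi1 : ((i : ℝ) + 1) ≠ 0 := by positivity
    have hmi : m = 2 * i := heq.symm
    subst hmi
    push_cast
    field_simp
    ring
  · -- 2*i > m : everything vanishes
    have z1 : Nat.choose ((m+2) - (i+1)) (i+1) = 0 := Nat.choose_eq_zero_of_lt (by omega)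
    have z2 : Nat.choose ((m+1) - (i+1)) (i+1) = 0 := Nat.choose_eq_zero_of_lt (by omega)
    have z3 : Nat.choose (m - i) i = 0 := Nat.choose_eq_zero_of_lt (by omega)
    rw [z1, z2, z3]
    simp

/-- The recurrence for incomplete h-Lucas polynomials, valid for all k. -/
lemma incL_rec (h : ℝ) (m k : ℕ) (hm : 1 ≤ m) :
    incL h (m+2) (k+1) = h * incL h (m+1) (k+1) + incL h m k := by
  unfold incL
  rw [Finset.mul_sum]
  rw [Finset.sum_range_succ' (fun i => ((m+2 : ℕ) : ℝ) / (((m+2) - i : ℕ) : ℝ)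
        * (Nat.choose ((m+2) - i) i : ℝ) * h ^ ((m+2) - 2*i)) (k+1)]
  rw [Finset.sum_range_succ' (fun i => h * (((m+1 : ℕ) : ℝ) / (((m+1) - i : ℕ) : ℝ)
        * (Nat.choose ((m+1) - i) i : ℝ) * h ^ ((m+1) - 2*i))) (k+1)]
  have h0 : (((m+2 : ℕ) : ℝ) / (((m+2) - 0 : ℕ) : ℝ)) * (Nat.choose ((m+2) - 0) 0 : ℝ)
      * h ^ ((m+2) - 2*0)
      = h * ((((m+1 : ℕ) : ℝ) / (((m+1) - 0 : ℕ) : ℝ)) * (Nat.choose ((m+1) - 0) 0 : ℝ)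
      * h ^ ((m+1) - 2*0)) := by
    simp only [Nat.sub_zero, Nat.choose_zero_right, Nat.cast_one, mul_one, Nat.mul_zero]
    have h1 : ((m : ℝ) + 2) ≠ 0 := by positivity
    have h2 : ((m : ℝ) + 1) ≠ 0 := by positivity
    push_cast
    rw [div_self h1, div_self h2]
    ring
  have hterm : ∀ i ∈ Finset.range (k+1),
      (((m+2 : ℕ) : ℝ) / (((m+2) - (i+1) : ℕ) : ℝ)) * (Nat.choose ((m+2) - (i+1)) (i+1) : ℝ)
        * h ^ ((m+2) - 2*(i+1))
      = h * ((((m+1 : ℕ) : ℝ) / (((m+1) - (i+1) : ℕ) : ℝ)) * (Nat.choose ((m+1) - (i+1)) (i+1) : ℝ)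
        * h ^ ((m+1) - 2*(i+1)))
      + ((m : ℕ) : ℝ) / ((m - i : ℕ) : ℝ) * (Nat.choose (m - i) i : ℝ) * h ^ (m - 2*i) := by
    intro i _
    exact term_id h m i hm
  rw [Finset.sum_congr rfl hterm, Finset.sum_add_distrib]
  push_cast at h0 ⊢
  rw [h0]
  ring

/-- Main identity without any side condition on `l`. -/
lemma incL_binom (h : ℝ) (s : ℕ) : ∀ n l : ℕ, 1 ≤ n →
    ∑ i ∈ Finset.range (s + 1), (Nat.choose s i : ℝ) * incL h (n + i) (l + i) * h ^ i =
      incL h (n + 2 * s) (l + s) := by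
  induction s with
  | zero => intro n l hn; simp
  | succ s ih =>
    intro n l hn
    have key := Finset.sum_range_succ' (fun i => (Nat.choose (s+1) i : ℝ) * incL h (n + i) (l + i) * h ^ i) (s+1)
    rw [key]
    have split : ∀ i ∈ Finset.range (s+1),
        (Nat.choose (s+1) (i+1) : ℝ) * incL h (n + (i+1)) (l + (i+1)) * h ^ (i+1)
        = (Nat.choose s i : ℝ) * incL h ((n+1) + i) ((l+1) + i) * h ^ i * h
          + (Nat.choose s (i+1) : ℝ) * incL h (n + (i+1)) (l + (i+1)) * h ^ (i+1) := by
      intro i _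
      have hcs : Nat.choose (s+1) (i+1) = Nat.choose s i + Nat.choose s (i+1) := Nat.choose_succ_succ s i
      rw [hcs]
      have e1 : n + (i+1) = (n+1) + i := by omega
      have e2 : l + (i+1) = (l+1) + i := by omega
      rw [e1, e2]
      push_cast
      ring
    rw [Finset.sum_congr rfl split, Finset.sum_add_distrib]
    have hA : (∑ i ∈ Finset.range (s+1), (Nat.choose s (i+1) : ℝ) * incL h (n + (i+1)) (l + (i+1)) * h ^ (i+1))
        + (Nat.choose (s+1) 0 : ℝ) * incL h (n + 0) (l + 0) * h ^ 0
        = incL h (n + 2*s) (l + s) := by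
      have peel := Finset.sum_range_succ' (fun i => (Nat.choose s i : ℝ) * incL h (n + i) (l + i) * h ^ i) (s+1)
      have last : (∑ i ∈ Finset.range (s+1+1), (Nat.choose s i : ℝ) * incL h (n + i) (l + i) * h ^ i)
          = ∑ i ∈ Finset.range (s+1), (Nat.choose s i : ℝ) * incL h (n + i) (l + i) * h ^ i := by
        rw [Finset.sum_range_succ, Nat.choose_eq_zero_of_lt (by omega)]
        simp
      rw [← ih n l hn, ← last, peel]
      simp
    have hB : (∑ i ∈ Finset.range (s+1), (Nat.choose s i : ℝ) * incL h ((n+1) + i) ((l+1) + i) * h ^ i * h)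
        = incL h ((n+1) + 2*s) ((l+1) + s) * h := by
      rw [← Finset.sum_mul, ih (n+1) (l+1) (by omega)]
    rw [add_assoc, hA, hB]
    have e3 : (n+1) + 2*s = (n + 2*s) + 1 := by omega
    have e4 : (l+1) + s = (l + s) + 1 := by omega
    have e5 : n + 2*(s+1) = (n + 2*s) + 2 := by omega
    have e6 : l + (s+1) = (l + s) + 1 := by omega
    rw [e3, e4, e5, e6, incL_rec h (n + 2*s) (l + s) (by omega)]
    ring

theorem incL_binomial_sum (h : ℝ) (s n l : ℕ) (hn : 1 ≤ n) (hl : l ≤ (n - s) / 2) :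
    ∑ i ∈ Finset.range (s + 1), (Nat.choose s i : ℝ) * incL h (n + i) (l + i) * h ^ i =
      incL h (n + 2 * s) (l + s) := by
  exact incL_binom h s n l hn
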